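/- Let 𝔉 : ℝⁿ → ℝⁿ be differentiable on a bounded convex open set W, let x₀ ∈ W with A = Jac 𝔉(x₀) invertible, and suppose |∂𝔉ᵢ/∂xⱼ(x) − ∂𝔉ᵢ/∂xⱼ(x₀)| < M for all x ∈ W and all 1 ≤ i,j ≤ n, where 0 < M < |det A|/(n·n!·a_max^{n−1}) and a_max is the maximum absolute value of the entries of A. Then for all x₁, x₂ ∈ W, ‖x₁ − x₂‖ ≤ (n!·a_max^{n−1}/(|det A| − n·M·n!·a_max^{n−1}))·‖𝔉(x₁) − 𝔉(x₂)‖. In particular 𝔉 is injective on W. -/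

import Mathlib

open Matrix


lemma aux_det {k : ℕ} (B : Matrix (Fin k) (Fin k) ℝ) {a : ℝ} (ha : 0 ≤ a)
    (h : ∀ i j, |B i j| ≤ a) : |B.det| ≤ k.factorial * a ^ k := by
  rw [Matrix.det_apply]
  calc |∑ σ : Equiv.Perm (Fin k), Equiv.Perm.sign σ • ∏ i, B (σ i) i|
      ≤ ∑ σ : Equiv.Perm (Fin k), |Equiv.Perm.sign σ • ∏ i, B (σ i) i| :=
        Finset.abs_sum_le_sum_abs _ _
    _ ≤ ∑ _σ : Equiv.Perm (Fin k), a ^ k := by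
        refine Finset.sum_le_sum fun σ _ => ?_
        have h1 : |Equiv.Perm.sign σ • ∏ i, B (σ i) i| = |∏ i, B (σ i) i| := by
          rcases Int.units_eq_one_or (Equiv.Perm.sign σ) with hs | hs <;> simp [hs]
        rw [h1, Finset.abs_prod]
        calc ∏ i, |B (σ i) i| ≤ ∏ _i : Fin k, a :=
              Finset.prod_le_prod (fun _ _ => abs_nonneg _) (fun i _ => h _ _)
          _ = a ^ k := by simp
    _ = k.factorial * a ^ k := by
        rw [Finset.sum_const, Finset.card_univ, nsmul_eq_mul, Fintype.card_perm,
          Fintype.card_fin]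

lemma aux_opnorm {n : ℕ} (B : Matrix (Fin n) (Fin n) ℝ) {c : ℝ} (hc : 0 ≤ c)
    (h : ∀ i j, |B i j| ≤ c) : ‖toEuclideanCLM (𝕜 := ℝ) B‖ ≤ n * c := by
  refine ContinuousLinearMap.opNorm_le_bound _ (by positivity) fun x => ?_
  set y := toEuclideanCLM (𝕜 := ℝ) B x with hy
  have hyi : ∀ i, |y i| ≤ c * ∑ j, |x j| := by
    intro i
    have hyy : y i = ∑ j, B i j * x j := rfl
    rw [hyy]
    calc |∑ j, B i j * x j| ≤ ∑ j, |B i j * x j| := Finset.abs_sum_le_sum_abs _ _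
      _ ≤ ∑ j, c * |x j| := by
          refine Finset.sum_le_sum fun j _ => ?_
          rw [abs_mul]
          exact mul_le_mul_of_nonneg_right (h i j) (abs_nonneg _)
      _ = c * ∑ j, |x j| := by rw [Finset.mul_sum]
  have hs : (∑ j, |x j|) ^ 2 ≤ (n : ℝ) * ∑ j, |x j| ^ 2 := by
    simpa using sq_sum_le_card_mul_sum_sq (s := Finset.univ) (f := fun j => |x j|)
  have hx2 : ∑ j, |x j| ^ 2 = ‖x‖ ^ 2 := by
    rw [EuclideanSpace.norm_eq]
    rw [Real.sq_sqrt (by positivity)]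
    simp [sq_abs]
  have hy2 : ‖y‖ ^ 2 = ∑ i, |y i| ^ 2 := by
    rw [EuclideanSpace.norm_eq, Real.sq_sqrt (by positivity)]
    simp [sq_abs]
  have key : ‖y‖ ^ 2 ≤ ((n : ℝ) * c * ‖x‖) ^ 2 := by
    rw [hy2]
    calc ∑ i, |y i| ^ 2 ≤ ∑ _i : Fin n, (c * ∑ j, |x j|) ^ 2 := by
          refine Finset.sum_le_sum fun i _ => ?_
          exact pow_le_pow_left₀ (abs_nonneg _) (hyi i) 2
      _ = (n : ℝ) * (c * ∑ j, |x j|) ^ 2 := by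
          simp [Finset.sum_const, Finset.card_univ, nsmul_eq_mul]
      _ = (n : ℝ) * (c ^ 2 * (∑ j, |x j|) ^ 2) := by ring
      _ ≤ (n : ℝ) * (c ^ 2 * ((n : ℝ) * ∑ j, |x j| ^ 2)) := by
          refine mul_le_mul_of_nonneg_left (mul_le_mul_of_nonneg_left hs (by positivity)) (by positivity)
      _ = ((n : ℝ) * c * ‖x‖) ^ 2 := by rw [hx2]; ring
  exact le_of_pow_le_pow_left₀ two_ne_zero (by positivity) key

set_option maxHeartbeats 1000000 in
theorem stmt4 (n : ℕ)
    (𝔉 : EuclideanSpace ℝ (Fin n) → EuclideanSpace ℝ (Fin n))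
    (J : EuclideanSpace ℝ (Fin n) → Matrix (Fin n) (Fin n) ℝ)
    (W : Set (EuclideanSpace ℝ (Fin n))) (x₀ : EuclideanSpace ℝ (Fin n))
    (hWo : IsOpen W) (hWc : Convex ℝ W) (hWb : Bornology.IsBounded W) (hx₀ : x₀ ∈ W)
    (hderiv : ∀ x ∈ W, HasFDerivAt 𝔉 (Matrix.toEuclideanCLM (𝕜 := ℝ) (J x)) x)
    (hA : IsUnit (J x₀)) (amax M : ℝ)
    (hamax : ∀ i j, |J x₀ i j| ≤ amax) (hattain : ∃ i j, |J x₀ i j| = amax)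
    (hM0 : 0 < M)
    (hM : M < |(J x₀).det| / (n * n.factorial * amax ^ (n - 1)))
    (hclose : ∀ x ∈ W, ∀ i j, |J x i j - J x₀ i j| < M) :
    (∀ x₁ ∈ W, ∀ x₂ ∈ W,
        ‖x₁ - x₂‖ ≤ (n.factorial * amax ^ (n - 1) /
            (|(J x₀).det| - n * M * n.factorial * amax ^ (n - 1))) * ‖𝔉 x₁ - 𝔉 x₂‖) ∧
      Set.InjOn 𝔉 W := by
  have aux_det : ∀ {k : ℕ} (B : Matrix (Fin k) (Fin k) ℝ) {a : ℝ}, 0 ≤ a →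
      (∀ i j, |B i j| ≤ a) → |B.det| ≤ k.factorial * a ^ k := @aux_det
  -- dispose of n = 0
  rcases Nat.eq_zero_or_pos n with hn0 | hn
  · exfalso
    subst hn0
    norm_num at hM
    linarith
  obtain ⟨m, rfl⟩ := Nat.exists_eq_succ_of_ne_zero hn.ne'
  set A : Matrix (Fin (m + 1)) (Fin (m + 1)) ℝ := J x₀ with hAdef
  have hdetu : IsUnit A.det := (Matrix.isUnit_iff_isUnit_det A).mp hA
  have hdet0 : A.det ≠ 0 := hdetu.ne_zero
  have hd : (0 : ℝ) < |A.det| := abs_pos.mpr hdet0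
  -- amax ≥ 0 and > 0
  have hamax0 : 0 ≤ amax := by
    obtain ⟨i, j, hij⟩ := hattain
    exact hij ▸ abs_nonneg _
  have hamaxpos : 0 < amax := by
    rcases lt_or_eq_of_le hamax0 with h | h
    · exact h
    · exfalso
      have hA0 : A = 0 := by
        ext i j
        have := hamax i j
        rw [← h] at this
        simpa using le_antisymm this (abs_nonneg _)
      rw [hA0] at hdet0
      exact hdet0 Matrix.det_zero
  -- notation
  set d : ℝ := |A.det| with hddef
  set P : ℝ := (m + 1).factorial * amax ^ m with hPdef
  have hm1 : (m + 1 : ℕ) - 1 = m := rfl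
  have hPpos : 0 < P := by positivity
  -- from hM : n M P < d
  have hMP : (m + 1 : ℝ) * M * P < d := by
    have hpos : (0 : ℝ) < (m + 1 : ℕ) * (m + 1).factorial * amax ^ ((m+1) - 1) := by
      positivity
    have := (lt_div_iff₀ hpos).mp hM
    rw [hm1] at this
    push_cast at this ⊢
    nlinarith
  have hDpos : 0 < d - (m + 1 : ℝ) * M * P := by linarith
  -- inverse entry bound
  have hadj : ∀ i j, |A.adjugate i j| ≤ m.factorial * amax ^ m := by
    intro i j
    rw [Matrix.adjugate_fin_succ_eq_det_submatrix, abs_mul, abs_pow, abs_neg, abs_one,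
      one_pow, one_mul]
    exact aux_det _ hamax0 (fun i' j' => hamax _ _)
  have hinv_entry : ∀ i j, |A⁻¹ i j| ≤ m.factorial * amax ^ m / d := by
    intro i j
    rw [Matrix.inv_def, Matrix.smul_apply, smul_eq_mul, abs_mul,
      Ring.inverse_eq_inv, abs_inv]
    rw [div_eq_inv_mul]
    exact mul_le_mul_of_nonneg_left (hadj i j) (by positivity)
  -- operator norm bound for the inverse
  have hinvnorm : ‖toEuclideanCLM (𝕜 := ℝ) A⁻¹‖ ≤ P / d := by
    have h1 := aux_opnorm A⁻¹ (by positivity) hinv_entry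
    have h2 : ((m + 1 : ℕ) : ℝ) * (m.factorial * amax ^ m / d) = P / d := by
      rw [hPdef, Nat.factorial_succ]
      push_cast
      field_simp
    linarith [h2 ▸ h1]
  -- the inverse CLM inverts
  have hmulinv : ∀ v : EuclideanSpace ℝ (Fin (m + 1)),
      toEuclideanCLM (𝕜 := ℝ) A⁻¹ (toEuclideanCLM (𝕜 := ℝ) A v) = v := by
    intro v
    have : toEuclideanCLM (𝕜 := ℝ) A⁻¹ * toEuclideanCLM (𝕜 := ℝ) A = 1 := by
      rw [← _root_.map_mul, Matrix.nonsing_inv_mul A hdetu, _root_.map_one]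
    calc toEuclideanCLM (𝕜 := ℝ) A⁻¹ (toEuclideanCLM (𝕜 := ℝ) A v)
        = (toEuclideanCLM (𝕜 := ℝ) A⁻¹ * toEuclideanCLM (𝕜 := ℝ) A) v := rfl
      _ = v := by rw [this]; rfl
  -- mean value inequality for g = 𝔉 - A x
  set T : EuclideanSpace ℝ (Fin (m + 1)) →L[ℝ] EuclideanSpace ℝ (Fin (m + 1)) :=
      toEuclideanCLM (𝕜 := ℝ) A with hTdef
  set g : EuclideanSpace ℝ (Fin (m + 1)) → EuclideanSpace ℝ (Fin (m + 1)) :=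
      fun x => 𝔉 x - T x with hgdef
  have hgderiv : ∀ x ∈ W, HasFDerivWithinAt g
      (toEuclideanCLM (𝕜 := ℝ) (J x) - T) W x := fun x hx =>
    ((hderiv x hx).sub (T.hasFDerivAt)).hasFDerivWithinAt
  have hgbound : ∀ x ∈ W, ‖toEuclideanCLM (𝕜 := ℝ) (J x) - T‖ ≤ (m + 1 : ℝ) * M := by
    intro x hx
    have : toEuclideanCLM (𝕜 := ℝ) (J x) - T = toEuclideanCLM (𝕜 := ℝ) (J x - A) := by
      rw [map_sub]
    rw [this]
    have h := aux_opnorm (J x - A) hM0.le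
      (fun i j => (by simpa using (hclose x hx i j).le))
    push_cast at h ⊢
    exact h
  have hMVT : ∀ x₁ ∈ W, ∀ x₂ ∈ W, ‖g x₁ - g x₂‖ ≤ ((m + 1 : ℝ) * M) * ‖x₁ - x₂‖ :=
    fun x₁ h₁ x₂ h₂ =>
      Convex.norm_image_sub_le_of_norm_hasFDerivWithin_le hgderiv hgbound hWc h₂ h₁
  -- the main quantitative bound
  have main : ∀ x₁ ∈ W, ∀ x₂ ∈ W,
      ‖x₁ - x₂‖ ≤ (P / (d - (m + 1 : ℝ) * M * P)) * ‖𝔉 x₁ - 𝔉 x₂‖ := by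
    intro x₁ h₁ x₂ h₂
    set v := x₁ - x₂ with hvdef
    have hTv : T v = (𝔉 x₁ - 𝔉 x₂) - (g x₁ - g x₂) := by
      have h1 : T v = T x₁ - T x₂ := _root_.map_sub T x₁ x₂
      rw [h1]
      simp only [hgdef]
      abel
    have hvle : ‖v‖ ≤ (P / d) * ‖T v‖ := by
      calc ‖v‖ = ‖toEuclideanCLM (𝕜 := ℝ) A⁻¹ (T v)‖ := by rw [hmulinv]
        _ ≤ ‖toEuclideanCLM (𝕜 := ℝ) A⁻¹‖ * ‖T v‖ := ContinuousLinearMap.le_opNorm _ _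
        _ ≤ (P / d) * ‖T v‖ := mul_le_mul_of_nonneg_right hinvnorm (norm_nonneg _)
    have hTvle : ‖T v‖ ≤ ‖𝔉 x₁ - 𝔉 x₂‖ + ((m + 1 : ℝ) * M) * ‖v‖ := by
      rw [hTv]
      calc ‖(𝔉 x₁ - 𝔉 x₂) - (g x₁ - g x₂)‖ ≤ ‖𝔉 x₁ - 𝔉 x₂‖ + ‖g x₁ - g x₂‖ :=
            norm_sub_le _ _
        _ ≤ ‖𝔉 x₁ - 𝔉 x₂‖ + ((m + 1 : ℝ) * M) * ‖v‖ := by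
            linarith [hMVT x₁ h₁ x₂ h₂]
    have hcomb : ‖v‖ ≤ (P / d) * (‖𝔉 x₁ - 𝔉 x₂‖ + ((m + 1 : ℝ) * M) * ‖v‖) :=
      hvle.trans (mul_le_mul_of_nonneg_left hTvle (by positivity))
    have hcomb' : d * ‖v‖ ≤ P * (‖𝔉 x₁ - 𝔉 x₂‖ + ((m + 1 : ℝ) * M) * ‖v‖) := by
      have := mul_le_mul_of_nonneg_left hcomb hd.le
      calc d * ‖v‖ ≤ d * ((P / d) * (‖𝔉 x₁ - 𝔉 x₂‖ + ((m + 1 : ℝ) * M) * ‖v‖)) := this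
        _ = P * (‖𝔉 x₁ - 𝔉 x₂‖ + ((m + 1 : ℝ) * M) * ‖v‖) := by field_simp
    rw [div_mul_eq_mul_div, le_div_iff₀ hDpos]
    have hexp : P * (‖𝔉 x₁ - 𝔉 x₂‖ + ((m + 1 : ℝ) * M) * ‖v‖)
        = P * ‖𝔉 x₁ - 𝔉 x₂‖ + (m + 1 : ℝ) * M * P * ‖v‖ := by ring
    rw [hexp] at hcomb'
    have hgoal : ‖v‖ * (d - (m + 1 : ℝ) * M * P)
        = d * ‖v‖ - (m + 1 : ℝ) * M * P * ‖v‖ := by ring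
    rw [hgoal]
    linarith
  constructor
  · intro x₁ h₁ x₂ h₂
    have h := main x₁ h₁ x₂ h₂
    have heq : ((m + 1).factorial : ℝ) * amax ^ ((m + 1) - 1) /
        (d - ((m + 1 : ℕ) : ℝ) * M * (m + 1).factorial * amax ^ ((m + 1) - 1))
        = P / (d - (m + 1 : ℝ) * M * P) := by
      rw [hm1, hPdef]
      push_cast
      ring_nf
    rw [heq]
    exact h
  · intro x₁ h₁ x₂ h₂ hF
    have := main x₁ h₁ x₂ h₂
    rw [hF, sub_self, norm_zero, mul_zero] at this
    have : x₁ - x₂ = 0 := by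
      have h0 : ‖x₁ - x₂‖ = 0 := le_antisymm this (norm_nonneg _)
      exact norm_eq_zero.mp h0
    exact sub_eq_zero.mp this
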